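/- There exist continuous odd functions g₁, g₂ : ℝ → ℝ such that g = g₁ − g₂ on ℝ, g₁(s) ≥ 0 and g₂(s) ≥ m s for all s ≥ 0, lim_{s→0} g₁(s)/s = 0, and lim_{s→+∞} g₁(s)/s^{2*−1} = 0. -/

import Mathlib

open Filter Set

/-- There exist continuous odd functions g₁, g₂ with g = g₁ − g₂,
g₁(s) ≥ 0 and g₂(s) ≥ m s for s ≥ 0, lim_{s→0} g₁(s)/s = 0 and
lim_{s→+∞} g₁(s)/s^{2*−1} = 0, where 2* = 2N/(N−2). -/
theorem stmt19 (N : ℕ) (hN : 3 ≤ N) (g : ℝ → ℝ) (m : ℝ) (hm : 0 < m)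
    (hgc : Continuous g) (hgodd : ∀ s, g (-s) = -g s)
    (hliminf : ⊥ < Filter.liminf (fun s : ℝ => ((g s / s : ℝ) : EReal))
      (nhdsWithin 0 (Set.Ioi 0)))
    (hlimsup : Filter.limsup (fun s : ℝ => ((g s / s : ℝ) : EReal))
      (nhdsWithin 0 (Set.Ioi 0)) = ((-m : ℝ) : EReal))
    (hg3' : Filter.Tendsto (fun s : ℝ => g s / |s| ^ (2 * (N : ℝ) / ((N : ℝ) - 2) - 1))
      Filter.atTop (nhds 0)) :
    ∃ g₁ g₂ : ℝ → ℝ,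
      Continuous g₁ ∧ Continuous g₂ ∧
      (∀ s, g₁ (-s) = -g₁ s) ∧ (∀ s, g₂ (-s) = -g₂ s) ∧
      (∀ s, g s = g₁ s - g₂ s) ∧
      (∀ s, 0 ≤ s → 0 ≤ g₁ s) ∧ (∀ s, 0 ≤ s → m * s ≤ g₂ s) ∧
      Filter.Tendsto (fun s => g₁ s / s) (nhdsWithin 0 {(0 : ℝ)}ᶜ) (nhds 0) ∧
      Filter.Tendsto (fun s : ℝ => g₁ s / s ^ (2 * (N : ℝ) / ((N : ℝ) - 2) - 1))
        Filter.atTop (nhds 0) := by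
  set p : ℝ := 2 * (N : ℝ) / ((N : ℝ) - 2) - 1 with hp
  have hN2 : (2:ℝ) < (N:ℝ) := by exact_mod_cast lt_of_lt_of_le (by norm_num) hN
  have hp1 : 1 < p := by
    rw [hp]
    rw [lt_sub_iff_add_lt]
    rw [lt_div_iff₀ (by linarith)]
    linarith
  have hg0 : g 0 = 0 := by have := hgodd 0; simp at this; linarith
  set f : ℝ → ℝ := fun s => g s + m * s with hf
  have hfodd : ∀ s, f (-s) = -f s := by
    intro s; simp only [hf, hgodd s]; ring
  have hf0 : f 0 = 0 := by simp [hf, hg0]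
  set g₁ : ℝ → ℝ := fun s => if (0:ℝ) ≤ s then max (f s) 0 else min (f s) 0 with hg₁
  set g₂ : ℝ → ℝ := fun s => g₁ s - g s with hg₂
  have hfc : Continuous f := by continuity
  have hg₁c : Continuous g₁ := by
    apply Continuous.if_le (hfc.max continuous_const) (hfc.min continuous_const)
      continuous_const continuous_id
    intro x hx
    have hx0 : x = 0 := hx.symm
    subst hx0
    simp [hf0]
  have hg₁pos : ∀ s, 0 ≤ s → g₁ s = max (f s) 0 := fun s hs => if_pos hs
  have hg₁neg : ∀ s, s < 0 → g₁ s = min (f s) 0 := fun s hs => if_neg (not_le.mpr hs)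
  have hg₁odd : ∀ s, g₁ (-s) = -g₁ s := by
    intro s
    rcases lt_trichotomy s 0 with h | h | h
    · rw [hg₁pos _ (by linarith), hg₁neg _ h, hfodd]
      rcases le_total (f s) 0 with hfs | hfs
      · rw [max_eq_left (by linarith), min_eq_left hfs]
      · rw [max_eq_right (by linarith), min_eq_right hfs]; ring
    · simp [h, hg₁pos 0 le_rfl, hf0]
    · rw [hg₁neg (-s) (by linarith), hg₁pos _ h.le, hfodd]
      rcases le_total (f s) 0 with hfs | hfs
      · rw [min_eq_right (by linarith), max_eq_right hfs]; ring
      · rw [min_eq_left (by linarith), max_eq_left hfs]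
  -- key right limit at 0
  have hkey : Tendsto (fun s => g₁ s / s) (nhdsWithin 0 (Ioi 0)) (nhds 0) := by
    rw [NormedAddCommGroup.tendsto_nhds_zero]
    intro ε hε
    have hlt : limsup (fun s : ℝ => ((g s / s : ℝ) : EReal)) (nhdsWithin 0 (Ioi 0))
        < ((-m + ε : ℝ) : EReal) := by
      rw [hlimsup, EReal.coe_lt_coe_iff]; linarith
    have hev := eventually_lt_of_limsup_lt hlt
      (isBoundedUnder_of ⟨⊤, fun _ => le_top⟩)
    filter_upwards [hev, self_mem_nhdsWithin] with s hs hs0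
    have hs0 : (0:ℝ) < s := hs0
    have hgs : g s / s < -m + ε := by exact_mod_cast hs
    have hfs : f s / s < ε := by
      have : f s / s = g s / s + m := by
        field_simp [hf]
        simp only [hf]; ring
      rw [this]; linarith
    have h1 : 0 ≤ g₁ s / s := div_nonneg (by rw [hg₁pos _ hs0.le]; exact le_max_right _ _) hs0.le
    have h2 : g₁ s / s < ε := by
      rw [hg₁pos _ hs0.le]
      rcases le_total (f s) 0 with h | h
      · rw [max_eq_right h]; simpa using hε
      · rw [max_eq_left h]; exact hfs
    rw [Real.norm_eq_abs, abs_of_nonneg h1]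
    exact h2
  have heven : ∀ s : ℝ, g₁ (-s) / (-s) = g₁ s / s := by
    intro s; rw [hg₁odd, neg_div_neg_eq]
  have hleft : Tendsto (fun s => g₁ s / s) (nhdsWithin 0 (Iio 0)) (nhds 0) := by
    have hneg : Tendsto (fun s : ℝ => -s) (nhdsWithin 0 (Iio 0)) (nhdsWithin 0 (Ioi 0)) := by
      apply tendsto_nhdsWithin_of_tendsto_nhds_of_eventually_within
      · have : Tendsto (fun s : ℝ => -s) (nhds 0) (nhds (-0)) := (continuous_neg).tendsto 0
        simpa using this.mono_left nhdsWithin_le_nhds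
      · filter_upwards [self_mem_nhdsWithin] with x hx
        simpa using hx
    have := hkey.comp hneg
    refine this.congr ?_
    intro s; exact heven s
  have hzero : Tendsto (fun s => g₁ s / s) (nhdsWithin 0 {(0:ℝ)}ᶜ) (nhds 0) := by
    rw [← Iio_union_Ioi, nhdsWithin_union, tendsto_sup]
    exact ⟨hleft, hkey⟩
  -- limit at infinity
  have hgp : Tendsto (fun s : ℝ => g s / s ^ p) atTop (nhds 0) := by
    refine hg3'.congr' ?_
    filter_upwards [eventually_ge_atTop (0:ℝ)] with s hs
    rw [abs_of_nonneg hs]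
  have hmp : Tendsto (fun s : ℝ => m * s / s ^ p) atTop (nhds 0) := by
    have h1 : Tendsto (fun s : ℝ => m * s ^ (-(p-1))) atTop (nhds 0) := by
      have := (tendsto_rpow_neg_atTop (by linarith : (0:ℝ) < p - 1)).const_mul m
      simpa using this
    refine h1.congr' ?_
    filter_upwards [eventually_gt_atTop (0:ℝ)] with s hs
    rw [neg_sub, Real.rpow_sub hs, Real.rpow_one]
    rw [mul_div_assoc]
  have hfp : Tendsto (fun s : ℝ => f s / s ^ p) atTop (nhds 0) := by
    have := hgp.add hmp
    rw [add_zero] at this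
    refine this.congr ?_
    intro s; rw [hf]; ring
  have hmax : Tendsto (fun x : ℝ => max x 0) (nhds 0) (nhds 0) := by
    have h : Continuous (fun x : ℝ => max x 0) := continuous_id.max continuous_const
    simpa using h.tendsto (0:ℝ)
  have hinf : Tendsto (fun s : ℝ => g₁ s / s ^ p) atTop (nhds 0) := by
    refine (hmax.comp hfp).congr' ?_
    filter_upwards [eventually_gt_atTop (0:ℝ)] with s hs
    have hsp : (0:ℝ) < s ^ p := Real.rpow_pos_of_pos hs _
    simp only [Function.comp]
    rw [hg₁pos _ hs.le]
    rcases le_total (f s) 0 with h | h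
    · rw [max_eq_right h, max_eq_right (div_nonpos_of_nonpos_of_nonneg h hsp.le), zero_div]
    · rw [max_eq_left h, max_eq_left (div_nonneg h hsp.le)]
  refine ⟨g₁, g₂, hg₁c, by rw [hg₂]; exact hg₁c.sub hgc, hg₁odd, ?_, ?_, ?_, ?_, hzero, hinf⟩
  · intro s; rw [hg₂]; simp only [hg₁odd, hgodd]; ring
  · intro s; rw [hg₂]; ring
  · intro s hs; rw [hg₁pos _ hs]; exact le_max_right _ _
  · intro s hs
    show m * s ≤ g₁ s - g s
    rw [hg₁pos _ hs]
    have h1 : f s ≤ max (f s) 0 := le_max_left _ _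
    have h2 : f s = g s + m * s := rfl
    linarith
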